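/- Let p be an odd prime, let σ denote Kubota's 2-cocycle on SL₂(ℚ_p), and let 𝒩 be the set of matrices (a b; c d) ∈ SL₂(ℚ_p) with a − 1 ∈ pℤ_p, d − 1 ∈ pℤ_p, b ∈ pℤ_p and c ∈ p²ℤ_p. Then σ(v, v′) = 1 for all v, v′ ∈ 𝒩; that is, the trivial section v ↦ ⟨v, 1⟩ is a group homomorphism from 𝒩 into the metaplectic double cover of SL₂(ℚ_p). -/

import Mathlib

open scoped Classical

/-- The quadratic Hilbert symbol over `ℚ_p`: `1` if `z² = a·x² + b·y²` has a nonzero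
solution, `-1` otherwise. -/
noncomputable def hilbertSym (p : ℕ) [Fact p.Prime] (a b : ℚ_[p]) : ℤ :=
  if ∃ x y z : ℚ_[p], (x, y, z) ≠ (0, 0, 0) ∧ z ^ 2 = a * x ^ 2 + b * y ^ 2 then 1 else -1

/-- Kubota's function `x(g)`: the lower-left entry if nonzero, else the lower-right entry. -/
noncomputable def kubotaX (p : ℕ) [Fact p.Prime] (g : Matrix (Fin 2) (Fin 2) ℚ_[p]) : ℚ_[p] :=
  if g 1 0 ≠ 0 then g 1 0 else g 1 1

/-- Kubota's 2-cocycle on `SL₂(ℚ_p)`. -/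
noncomputable def kubota (p : ℕ) [Fact p.Prime]
    (g g' : Matrix.SpecialLinearGroup (Fin 2) ℚ_[p]) : ℤ :=
  hilbertSym p (kubotaX p ↑(g * g') / kubotaX p ↑g) (kubotaX p ↑(g * g') / kubotaX p ↑g')

/-- The congruence subgroup `𝒩 = {(a b; c d) : a-1, d-1 ∈ pℤ_p, b ∈ pℤ_p, c ∈ p²ℤ_p}`. -/
def inNodd (p : ℕ) [Fact p.Prime] (v : Matrix.SpecialLinearGroup (Fin 2) ℚ_[p]) : Prop :=
  (∃ y : ℤ_[p], (v : Matrix (Fin 2) (Fin 2) ℚ_[p]) 0 0 - 1 = (p : ℚ_[p]) * (y : ℚ_[p])) ∧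
  (∃ y : ℤ_[p], (v : Matrix (Fin 2) (Fin 2) ℚ_[p]) 1 1 - 1 = (p : ℚ_[p]) * (y : ℚ_[p])) ∧
  (∃ y : ℤ_[p], (v : Matrix (Fin 2) (Fin 2) ℚ_[p]) 0 1 = (p : ℚ_[p]) * (y : ℚ_[p])) ∧
  (∃ y : ℤ_[p], (v : Matrix (Fin 2) (Fin 2) ℚ_[p]) 1 0 = (p : ℚ_[p]) ^ 2 * (y : ℚ_[p]))


lemma sq_one_add_p (p : ℕ) [Fact p.Prime] (hp : Odd p) (y : ℤ_[p]) :
    ∃ t : ℤ_[p], t ^ 2 = 1 + p * y := by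
  have h2 : ‖(2 : ℤ_[p])‖ = 1 := by
    refine le_antisymm (PadicInt.norm_le_one _) ?_
    by_contra h
    push_neg at h
    have h' : ‖((2 : ℤ) : ℤ_[p])‖ < 1 := by norm_num at h ⊢; exact h
    rw [PadicInt.norm_int_lt_one_iff_dvd] at h'
    have hpd : p ∣ 2 := by exact_mod_cast h'
    have hle : p ≤ 2 := Nat.le_of_dvd (by norm_num) hpd
    have hge : 2 ≤ p := (Fact.out : p.Prime).two_le
    have : p = 2 := le_antisymm hle hge
    rw [this] at hp
    exact (by norm_num : ¬ Odd 2) hp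
  set F : Polynomial ℤ_[p] := Polynomial.X ^ 2 - Polynomial.C (1 + p * y) with hF
  have heval : F.eval 1 = -(p * y) := by simp [hF]
  have hderiv : Polynomial.derivative F = Polynomial.C 2 * Polynomial.X := by
    simp [hF]
    rw [one_add_one_eq_two, map_ofNat]
  have hde : (Polynomial.derivative F).eval 1 = 2 := by simp [hderiv]
  have hnorm : ‖F.eval 1‖ < ‖(Polynomial.derivative F).eval 1‖ ^ 2 := by
    rw [heval, hde, h2, norm_neg]
    calc ‖(p : ℤ_[p]) * y‖ ≤ ‖(p : ℤ_[p])‖ * 1 := by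
          refine le_trans (norm_mul_le _ _) ?_
          gcongr
          exact PadicInt.norm_le_one _
      _ < 1 ^ 2 := by
          rw [PadicInt.norm_p, mul_one]
          rw [one_pow]; exact inv_lt_one_of_one_lt₀ (by exact_mod_cast (Fact.out : p.Prime).one_lt : (1:ℝ) < p)
  obtain ⟨z, hz, -⟩ := hensels_lemma hnorm
  refine ⟨z, ?_⟩
  have : z ^ 2 - (1 + p * y) = 0 := by simpa [hF] using hz
  exact sub_eq_zero.mp this

lemma one_add_p_ne (p : ℕ) [Fact p.Prime] (y : ℤ_[p]) : (1 + p * y : ℤ_[p]) ≠ 0 := by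
  intro h0
  have h1 : (1 : ℤ_[p]) = -(p * y) := by linear_combination h0
  have : (1 : ℝ) = ‖(1 : ℤ_[p])‖ := by simp
  rw [h1, norm_neg] at this
  have hle : ‖(p : ℤ_[p]) * y‖ < 1 := by
    calc ‖(p : ℤ_[p]) * y‖ ≤ ‖(p : ℤ_[p])‖ * ‖y‖ := norm_mul_le _ _
      _ ≤ ‖(p : ℤ_[p])‖ * 1 := by gcongr; exact PadicInt.norm_le_one _
      _ < 1 := by
          rw [PadicInt.norm_p, mul_one]
          exact inv_lt_one_of_one_lt₀ (by exact_mod_cast (Fact.out : p.Prime).one_lt : (1:ℝ) < p)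
  rw [← this] at hle
  exact lt_irrefl _ hle

lemma sq_of_near_one (p : ℕ) [Fact p.Prime] (hp : Odd p) {X : ℚ_[p]} {y : ℤ_[p]}
    (h : X - 1 = (p : ℚ_[p]) * (y : ℚ_[p])) : ∃ t : ℚ_[p], t ≠ 0 ∧ t ^ 2 = X := by
  have hX : X = ((1 + p * y : ℤ_[p]) : ℚ_[p]) := by push_cast; linear_combination h
  obtain ⟨t, ht⟩ := sq_one_add_p p hp y
  refine ⟨(t : ℚ_[p]), ?_, ?_⟩
  · intro h0
    have : t = 0 := by rwa [PadicInt.coe_eq_zero] at h0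
    rw [this] at ht
    exact one_add_p_ne p y (by linear_combination -ht)
  · rw [hX, ← ht]; push_cast; ring

/-- For an odd prime `p`, Kubota's cocycle is trivial on the congruence subgroup `𝒩` of
`SL₂(ℚ_p)`, i.e. the trivial section splits the metaplectic double cover over `𝒩`. -/
theorem kubota_cocycle_trivial_on_N_odd (p : ℕ) [Fact p.Prime] (hp : Odd p)
    (v v' : Matrix.SpecialLinearGroup (Fin 2) ℚ_[p])
    (hv : inNodd p v) (hv' : inNodd p v') : kubota p v v' = 1 := by
  obtain ⟨⟨yA, hA⟩, ⟨yD, hD⟩, ⟨yB, hB⟩, ⟨yC, hC⟩⟩ := hv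
  obtain ⟨⟨yA', hA'⟩, ⟨yD', hD'⟩, ⟨yB', hB'⟩, ⟨yC', hC'⟩⟩ := hv'
  set M : Matrix (Fin 2) (Fin 2) ℚ_[p] := ↑v with hM
  set M' : Matrix (Fin 2) (Fin 2) ℚ_[p] := ↑v' with hM'
  have hCm : (↑(v * v') : Matrix (Fin 2) (Fin 2) ℚ_[p]) 1 0
      = M 1 0 * M' 0 0 + M 1 1 * M' 1 0 := by
    rw [Matrix.SpecialLinearGroup.coe_mul]
    simp [Matrix.mul_apply, Fin.sum_univ_two]
    rfl
  have hDm : (↑(v * v') : Matrix (Fin 2) (Fin 2) ℚ_[p]) 1 1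
      = M 1 0 * M' 0 1 + M 1 1 * M' 1 1 := by
    rw [Matrix.SpecialLinearGroup.coe_mul]
    simp [Matrix.mul_apply, Fin.sum_univ_two]
    rfl
  obtain ⟨tD, htDne, htD⟩ := sq_of_near_one p hp hD
  obtain ⟨tD', htD'ne, htD'⟩ := sq_of_near_one p hp hD'
  obtain ⟨tA', htA'ne, htA'⟩ := sq_of_near_one p hp hA'
  have hDne : M 1 1 ≠ 0 := by rw [← htD]; exact pow_ne_zero _ htDne
  have hD'ne : M' 1 1 ≠ 0 := by rw [← htD']; exact pow_ne_zero _ htD'ne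
  have hA'ne : M' 0 0 ≠ 0 := by rw [← htA']; exact pow_ne_zero _ htA'ne
  have hxv : kubotaX p M = if M 1 0 ≠ 0 then M 1 0 else M 1 1 := rfl
  have hxv' : kubotaX p M' = if M' 1 0 ≠ 0 then M' 1 0 else M' 1 1 := rfl
  have key : ∃ x y z : ℚ_[p], (x, y, z) ≠ (0, 0, 0) ∧
      z ^ 2 = (kubotaX p ↑(v * v') / kubotaX p ↑v) * x ^ 2
        + (kubotaX p ↑(v * v') / kubotaX p ↑v') * y ^ 2 := by
    by_cases hc : M 1 0 = 0
    · by_cases hc' : M' 1 0 = 0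
      · -- case 1 : both lower-left entries vanish
        have h1 : kubotaX p ↑v = M 1 1 := by rw [← hM, hxv, if_neg (by simpa using hc)]
        have h2 : kubotaX p ↑v' = M' 1 1 := by rw [← hM', hxv', if_neg (by simpa using hc')]
        have h0 : (↑(v * v') : Matrix (Fin 2) (Fin 2) ℚ_[p]) 1 0 = 0 := by
          rw [hCm, hc, hc']; ring
        have h3 : kubotaX p ↑(v * v') = M 1 1 * M' 1 1 := by
          rw [kubotaX, if_neg (by simpa using h0), hDm, hc]; ring
        refine ⟨M 1 1, 0, M 1 1 * tD', ?_, ?_⟩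
        · simp [hDne]
        · rw [h1, h2, h3]
          field_simp
          linear_combination (M 1 1) * htD'
      · -- case 2 : M 1 0 = 0, M' 1 0 ≠ 0
        have h1 : kubotaX p ↑v = M 1 1 := by rw [← hM, hxv, if_neg (by simpa using hc)]
        have h2 : kubotaX p ↑v' = M' 1 0 := by rw [← hM', hxv', if_pos (by simpa using hc')]
        have h0 : (↑(v * v') : Matrix (Fin 2) (Fin 2) ℚ_[p]) 1 0 = M 1 1 * M' 1 0 := by
          rw [hCm, hc]; ring
        have h3 : kubotaX p ↑(v * v') = M 1 1 * M' 1 0 := by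
          rw [kubotaX, if_pos (by simp [h0, hDne, hc'])]
          exact h0
        refine ⟨0, M' 1 0, M' 1 0 * tD, ?_, ?_⟩
        · simp [hc']
        · rw [h1, h2, h3]
          field_simp
          linear_combination (M' 1 0) * htD
    · by_cases hc' : M' 1 0 = 0
      · -- case 3 : M 1 0 ≠ 0, M' 1 0 = 0
        have h1 : kubotaX p ↑v = M 1 0 := by rw [← hM, hxv, if_pos (by simpa using hc)]
        have h2 : kubotaX p ↑v' = M' 1 1 := by rw [← hM', hxv', if_neg (by simpa using hc')]
        have h0 : (↑(v * v') : Matrix (Fin 2) (Fin 2) ℚ_[p]) 1 0 = M 1 0 * M' 0 0 := by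
          rw [hCm, hc']; ring
        have h3 : kubotaX p ↑(v * v') = M 1 0 * M' 0 0 := by
          rw [kubotaX, if_pos (by simp [h0, hc, hA'ne])]
          exact h0
        refine ⟨M 1 0, 0, M 1 0 * tA', ?_, ?_⟩
        · simp [hc]
        · rw [h1, h2, h3]
          field_simp
          linear_combination (M 1 0) * (M' 1 1) * htA'
      · have h1 : kubotaX p ↑v = M 1 0 := by rw [← hM, hxv, if_pos (by simpa using hc)]
        have h2 : kubotaX p ↑v' = M' 1 0 := by rw [← hM', hxv', if_pos (by simpa using hc')]
        by_cases hcc : M 1 0 * M' 0 0 + M 1 1 * M' 1 0 = 0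
        · -- case 5 : lower-left of the product vanishes
          have h0 : (↑(v * v') : Matrix (Fin 2) (Fin 2) ℚ_[p]) 1 0 = 0 := by rw [hCm, hcc]
          have h3 : kubotaX p ↑(v * v')
              = (↑(v * v') : Matrix (Fin 2) (Fin 2) ℚ_[p]) 1 1 := by
            rw [kubotaX, if_neg (by simpa using h0)]
          set E := (↑(v * v') : Matrix (Fin 2) (Fin 2) ℚ_[p]) 1 1 with hE
          refine ⟨tD * (M 1 0) * (M' 1 0), tA' * (M 1 0) * (M' 1 0), 0, ?_, ?_⟩
          · simp [htDne, hc, hc']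
          · rw [h1, h2, h3]
            field_simp
            linear_combination (-(E * (M 1 0) ^ 2 * (M' 1 0) ^ 3)) * htD
              + (-(E * (M 1 0) ^ 3 * (M' 1 0) ^ 2)) * htA'
              + (-(E * (M 1 0) ^ 2 * (M' 1 0) ^ 2)) * hcc
              + E * M 1 0 * M' 1 0 * (M 1 0 * M' 1 0 - 1) * M' 1 0 * htD
              + E * M 1 0 * M' 1 0 * (M 1 0 * M' 1 0 - 1) * M 1 0 * htA'
              + E * M 1 0 * M' 1 0 * (M 1 0 * M' 1 0 - 1) * hcc
        · -- case 4 : all three lower-left entries nonzero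
          have h0 : (↑(v * v') : Matrix (Fin 2) (Fin 2) ℚ_[p]) 1 0
              = M 1 0 * M' 0 0 + M 1 1 * M' 1 0 := hCm
          have h3 : kubotaX p ↑(v * v') = M 1 0 * M' 0 0 + M 1 1 * M' 1 0 := by
            rw [kubotaX, if_pos (by simp [h0, hcc])]
            exact h0
          refine ⟨tA' * M 1 0, tD * M' 1 0, M 1 0 * M' 0 0 + M 1 1 * M' 1 0, ?_, ?_⟩
          · simp only [ne_eq, Prod.mk.injEq, not_and]
            intro _ _
            exact hcc
          · rw [h1, h2, h3]
            field_simp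
            linear_combination
              (-(M 1 0) * (M 1 1) * (M' 1 0) ^ 3 - (M 1 0) ^ 2 * (M' 1 0) ^ 2 * (M' 0 0)) * htD
              + (-(M 1 0) ^ 2 * (M 1 1) * (M' 1 0) ^ 2 - (M 1 0) ^ 3 * (M' 1 0) * (M' 0 0)) * htA'
              + (M 1 0 * M' 1 0 * (M 1 0 * M' 0 0 + M 1 1 * M' 1 0) - 1) * M' 1 0 * htD
              + (M 1 0 * M' 1 0 * (M 1 0 * M' 0 0 + M 1 1 * M' 1 0) - 1) * M 1 0 * htA'
  rw [kubota, hilbertSym, if_pos key]
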